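/- In the threshold regression setting, if additionally E[f_{t-1}^2 1{z_t ≤ s_0 ∧ s < z_t ≤ s_0 ∨ s}] > 0 whenever s ≠ s_0 and E[f_{t-1}^2 1{z_t ≤ s}] > 0, E[f_{t-1}^2 1{z_t > s}] > 0 for all s in the parameter set, and φ_0^{(1)} ≠ φ_0^{(2)}, then E[ε_t(φ, s)^2] = E[ε_t(φ_0, s_0)^2] implies (φ, s) = (φ_0, s_0). -/

import Mathlib

open MeasureTheory

/-- If `D = 0` a.e. and `D = c * fprev` on a region `P` with
`∫ 1_P fprev² > 0`, then `c = 0`. -/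
lemma region_zero_aux {Ω : Type*} [MeasurableSpace Ω] (μ : Measure Ω)
    (fprev D : Ω → ℝ) (hDae : ∀ᵐ ω ∂μ, D ω = 0)
    (P : Ω → Prop) (inst : DecidablePred P) (c : ℝ)
    (hPc : ∀ ω, P ω → D ω = c * fprev ω)
    (hpos : 0 < ∫ ω, (@ite ℝ (P ω) (inst ω) ((fprev ω) ^ 2) 0) ∂μ) :
    c = 0 := by
  have h0 : ∫ ω, (c ^ 2 * @ite ℝ (P ω) (inst ω) ((fprev ω) ^ 2) 0) ∂μ = 0 := by
    have hae : (fun ω => c ^ 2 * @ite ℝ (P ω) (inst ω) ((fprev ω) ^ 2) 0)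
        =ᵐ[μ] (fun _ => (0 : ℝ)) := by
      filter_upwards [hDae] with ω hω
      by_cases hp : P ω
      · have h1 : c * fprev ω = 0 := by rw [← hPc ω hp, hω]
        simp only [hp, if_pos]
        calc c ^ 2 * fprev ω ^ 2 = (c * fprev ω) ^ 2 := by ring
          _ = 0 := by rw [h1]; ring
      · simp [hp]
    rw [integral_congr_ae hae, integral_zero]
  rw [integral_const_mul] at h0
  rcases mul_eq_zero.mp h0 with h | h
  · exact pow_eq_zero_iff two_ne_zero |>.mp h
  · exact absurd h hpos.ne'

/-- Uniqueness part of the identification lemma for two-regime threshold regression: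
under positivity of `E[f_{t-1}² 1{threshold band}]` for `s ≠ s₀`, positivity of
`E[f_{t-1}² 1{z ≤ s}]` and `E[f_{t-1}² 1{z > s}]` for all `s`, and `φ₀⁽¹⁾ ≠ φ₀⁽²⁾`,
equality `E[ε_t(φ,s)²] = E[ε_t(φ₀,s₀)²]` forces `(φ,s) = (φ₀,s₀)`. -/
theorem threshold_regression_identification_unique {Ω : Type*} [MeasurableSpace Ω]
    (μ : Measure Ω) [IsProbabilityMeasure μ]
    (fprev z ξ : Ω → ℝ)
    (hfmeas : Measurable fprev) (hzmeas : Measurable z) (hξmeas : Measurable ξ)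
    (hfL2 : MemLp fprev 2 μ) (hξL2 : MemLp ξ 2 μ)
    (hindep : ProbabilityTheory.IndepFun ξ (fun ω => (fprev ω, z ω)) μ)
    (hmean : ∫ ω, ξ ω ∂μ = 0)
    (ς : ℝ) (hς : 0 < ς) (hvar : ∫ ω, (ξ ω) ^ 2 ∂μ = ς ^ 2)
    (φ01 φ02 s0 : ℝ) (hφ0 : φ01 ≠ φ02)
    (ft : Ω → ℝ)
    (hft : ∀ ω, ft ω =
      (if z ω ≤ s0 then φ01 * fprev ω else φ02 * fprev ω) + ξ ω)
    (hband : ∀ s : ℝ, s ≠ s0 →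
      0 < ∫ ω, (if min s0 s < z ω ∧ z ω ≤ max s0 s then (fprev ω) ^ 2 else 0) ∂μ)
    (hlow : ∀ s : ℝ, 0 < ∫ ω, (if z ω ≤ s then (fprev ω) ^ 2 else 0) ∂μ)
    (hup : ∀ s : ℝ, 0 < ∫ ω, (if s < z ω then (fprev ω) ^ 2 else 0) ∂μ) :
    ∀ φ1 φ2 s : ℝ,
      (∫ ω, (ft ω - (if z ω ≤ s then φ1 * fprev ω else φ2 * fprev ω)) ^ 2 ∂μ =
        ∫ ω, (ft ω - (if z ω ≤ s0 then φ01 * fprev ω else φ02 * fprev ω)) ^ 2 ∂μ) →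
      φ1 = φ01 ∧ φ2 = φ02 ∧ s = s0 := by
  intro φ1 φ2 s heq
  obtain ⟨D, hDdef⟩ : ∃ D : Ω → ℝ, D = fun ω =>
      (if z ω ≤ s0 then φ01 * fprev ω else φ02 * fprev ω) -
      (if z ω ≤ s then φ1 * fprev ω else φ2 * fprev ω) := ⟨_, rfl⟩
  have hDmeas : Measurable D := by
    rw [hDdef]
    apply Measurable.sub <;>
      exact Measurable.ite (measurableSet_le hzmeas measurable_const)
        (hfmeas.const_mul _) (hfmeas.const_mul _)
  -- D is in L², bounded by C * |fprev|
  set C : ℝ := |φ01| + |φ02| + |φ1| + |φ2| with hCdef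
  have habs : ∀ ω, |D ω| ≤ |C * fprev ω| := by
    intro ω
    have h01 := abs_nonneg φ01; have h02 := abs_nonneg φ02
    have h1 := abs_nonneg φ1; have h2 := abs_nonneg φ2
    have hx := abs_nonneg (fprev ω)
    have key : ∀ a b : ℝ, |a| + |b| ≤ C → |a * fprev ω - b * fprev ω| ≤ |C * fprev ω| := by
      intro a b hab
      have h3 : |a * fprev ω - b * fprev ω| = |a - b| * |fprev ω| := by
        rw [← sub_mul, abs_mul]
      have h4 : |a - b| ≤ |C| := (abs_sub a b).trans (hab.trans (le_abs_self C))
      rw [h3, abs_mul]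
      exact mul_le_mul_of_nonneg_right h4 hx
    simp only [hDdef]
    by_cases hz0 : z ω ≤ s0 <;> by_cases hz : z ω ≤ s <;>
      simp only [hz0, hz, if_true, if_false] <;>
      [exact key φ01 φ1 (by simp only [hCdef]; linarith);
       exact key φ01 φ2 (by simp only [hCdef]; linarith);
       exact key φ02 φ1 (by simp only [hCdef]; linarith);
       exact key φ02 φ2 (by simp only [hCdef]; linarith)]
  have hDL2 : MemLp D 2 μ := by
    refine MemLp.of_le (hfL2.const_mul C) hDmeas.aestronglyMeasurable
      (Filter.Eventually.of_forall fun ω => ?_)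
    rw [Real.norm_eq_abs, Real.norm_eq_abs]; exact habs ω
  -- independence of ξ and D
  have hindD : ProbabilityTheory.IndepFun ξ D μ := by
    have hF : Measurable (fun p : ℝ × ℝ =>
        (if p.2 ≤ s0 then φ01 * p.1 else φ02 * p.1) -
        (if p.2 ≤ s then φ1 * p.1 else φ2 * p.1)) := by
      apply Measurable.sub <;>
        exact Measurable.ite (measurableSet_le measurable_snd measurable_const)
          (measurable_fst.const_mul _) (measurable_fst.const_mul _)
    rw [hDdef]
    exact hindep.comp measurable_id hF
  have hmulD : ∫ ω, ξ ω * D ω ∂μ = 0 := by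
    have hIM := hindD.integral_mul_eq_mul_integral hξL2.aestronglyMeasurable
      hDL2.aestronglyMeasurable
    simp only [Pi.mul_apply] at hIM
    rw [hIM, hmean, zero_mul]
  -- integrabilities
  have hξsq : Integrable (fun ω => ξ ω ^ 2) μ := hξL2.integrable_sq
  have hDsq : Integrable (fun ω => D ω ^ 2) μ := hDL2.integrable_sq
  have hξD : Integrable (fun ω => ξ ω * D ω) μ := by
    refine Integrable.mono' ((hξsq.add hDsq).const_mul (1/2))
      (hξL2.aestronglyMeasurable.mul hDL2.aestronglyMeasurable)
      (Filter.Eventually.of_forall fun ω => ?_)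
    rw [Real.norm_eq_abs, abs_mul]
    simp only [Pi.add_apply]
    linarith [two_mul_le_add_sq (|ξ ω|) (|D ω|), sq_abs (ξ ω), sq_abs (D ω)]
  -- expansion of the squared error
  have hsum : ∫ ω, (ξ ω + D ω) ^ 2 ∂μ =
      ∫ ω, ξ ω ^ 2 ∂μ + (2 * ∫ ω, ξ ω * D ω ∂μ + ∫ ω, D ω ^ 2 ∂μ) := by
    have e : (fun ω => (ξ ω + D ω) ^ 2) =
        fun ω => ξ ω ^ 2 + (2 * (ξ ω * D ω) + D ω ^ 2) := by
      funext ω; ring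
    have h1 : Integrable (fun ω => 2 * (ξ ω * D ω)) μ := hξD.const_mul 2
    have h2 : Integrable (fun ω => 2 * (ξ ω * D ω) + D ω ^ 2) μ := h1.add hDsq
    rw [e, integral_add hξsq h2, integral_add h1 hDsq, integral_const_mul]
  have heq' : ∫ ω, (ξ ω + D ω) ^ 2 ∂μ = ∫ ω, ξ ω ^ 2 ∂μ := by
    calc ∫ ω, (ξ ω + D ω) ^ 2 ∂μ
        = ∫ ω, (ft ω - (if z ω ≤ s then φ1 * fprev ω else φ2 * fprev ω)) ^ 2 ∂μ := by
          refine integral_congr_ae (Filter.Eventually.of_forall fun ω => ?_)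
          simp only [hft, hDdef]; ring
      _ = ∫ ω, (ft ω - (if z ω ≤ s0 then φ01 * fprev ω else φ02 * fprev ω)) ^ 2 ∂μ := heq
      _ = ∫ ω, ξ ω ^ 2 ∂μ := by
          refine integral_congr_ae (Filter.Eventually.of_forall fun ω => ?_)
          simp only [hft]; ring
  have hD2zero : ∫ ω, D ω ^ 2 ∂μ = 0 := by
    rw [hsum, hmulD] at heq'; linarith
  have hDae : ∀ᵐ ω ∂μ, D ω = 0 := by
    have h := (integral_eq_zero_iff_of_nonneg (fun ω => sq_nonneg (D ω)) hDsq).mp hD2zero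
    filter_upwards [h] with ω hω
    exact pow_eq_zero_iff two_ne_zero |>.mp hω
  -- identify φ1
  have e1 : φ1 = φ01 := by
    have hc : φ01 - φ1 = 0 := by
      refine region_zero_aux μ fprev D hDae (fun ω => z ω ≤ min s s0) _ _
        (fun ω hω => ?_) (hlow (min s s0))
      have hz : z ω ≤ s := hω.trans (min_le_left _ _)
      have hz0 : z ω ≤ s0 := hω.trans (min_le_right _ _)
      simp only [hDdef, hz, hz0, if_true]; ring
    linarith
  -- identify φ2
  have e2 : φ2 = φ02 := by
    have hc : φ02 - φ2 = 0 := by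
      refine region_zero_aux μ fprev D hDae (fun ω => max s s0 < z ω) _ _
        (fun ω hω => ?_) (hup (max s s0))
      have hz : ¬ z ω ≤ s := not_le.mpr ((le_max_left _ _).trans_lt hω)
      have hz0 : ¬ z ω ≤ s0 := not_le.mpr ((le_max_right _ _).trans_lt hω)
      simp only [hDdef, hz, hz0, if_false]; ring
    linarith
  refine ⟨e1, e2, ?_⟩
  -- identify s
  by_contra hs
  rcases Ne.lt_or_gt hs with h | h
  · -- s < s0 : on the band s < z ≤ s0 we get φ01 = φ02
    have hc : φ01 - φ02 = 0 := by
      refine region_zero_aux μ fprev D hDae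
        (fun ω => min s0 s < z ω ∧ z ω ≤ max s0 s) _ _
        (fun ω hω => ?_) (hband s hs)
      have hmin : min s0 s = s := min_eq_right h.le
      have hmax : max s0 s = s0 := max_eq_left h.le
      have hz : ¬ z ω ≤ s := not_le.mpr (hmin ▸ hω.1)
      have hz0 : z ω ≤ s0 := hmax ▸ hω.2
      simp only [hDdef, hz, hz0, if_true, if_false, e2]; ring
    exact hφ0 (by linarith)
  · -- s0 < s : on the band s0 < z ≤ s we get φ02 = φ01
    have hc : φ02 - φ01 = 0 := by
      refine region_zero_aux μ fprev D hDae
        (fun ω => min s0 s < z ω ∧ z ω ≤ max s0 s) _ _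
        (fun ω hω => ?_) (hband s hs)
      have hmin : min s0 s = s0 := min_eq_left h.le
      have hmax : max s0 s = s := max_eq_right h.le
      have hz0 : ¬ z ω ≤ s0 := not_le.mpr (hmin ▸ hω.1)
      have hz : z ω ≤ s := hmax ▸ hω.2
      simp only [hDdef, hz, hz0, if_true, if_false, e1]; ring
    exact hφ0 (by linarith)
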